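/- Classical analogue of the paper's Lemma identifying representations with bounded spectrum: let G be a compact abelian topological group with Haar probability measure μ, A a unital C*-algebra, and F a finite set of pairwise distinct continuous characters of G. Let P(F, A) be the set of families (p_χ)_{χ ∈ F} of projections in A satisfying p_χ p_{χ'} = 0 for χ ≠ χ' and Σ_{χ ∈ F} p_χ = 1, with the topology induced from the norm on A^F, and let R_F be the set of norm-continuous representations U of G in A such that P_{χ'}(U) = 0 for every continuous character χ' of G not in F, with the supremum-norm topology from C(G, A). Then the map sending (p_χ)_{χ ∈ F} to the representation g ↦ Σ_{χ ∈ F} χ(g) p_χ is a homeomorphism from P(F, A) onto R_F. -/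

import Mathlib

open MeasureTheory

set_option linter.unusedSectionVars false

section Aux

variable {G : Type*} [CommGroup G] [TopologicalSpace G] [IsTopologicalGroup G] [CompactSpace G]
  [MeasurableSpace G] [BorelSpace G]
  (μ : Measure G) [μ.IsHaarMeasure] [IsProbabilityMeasure μ]

theorem aux_integrable {E : Type*} [NormedAddCommGroup E] {h : G → E} (hh : Continuous h) :
    Integrable h μ :=
  hh.integrable_of_hasCompactSupport (HasCompactSupport.of_compactSpace h)

theorem aux_char_int (ψ : ContinuousMonoidHom G Circle) (hψ : ψ ≠ 1) :
    ∫ g, ((ψ g : ℂ)) ∂μ = 0 := by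
  obtain ⟨g₀, hg₀⟩ : ∃ g₀, ψ g₀ ≠ 1 := by
    by_contra hc
    push_neg at hc
    exact hψ (by ext g; exact congrArg _ (hc g))
  have h1 : ∫ g, ((ψ (g₀ * g) : ℂ)) ∂μ = ∫ g, ((ψ g : ℂ)) ∂μ :=
    integral_mul_left_eq_self (fun g => ((ψ g : ℂ))) g₀
  have h2 : ∀ g, ((ψ (g₀ * g) : ℂ)) = (ψ g₀ : ℂ) * (ψ g : ℂ) := by
    intro g; push_cast [map_mul]; ring
  simp_rw [h2, integral_const_mul] at h1
  have h3 : ((ψ g₀ : ℂ) - 1) * ∫ g, ((ψ g : ℂ)) ∂μ = 0 := by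
    rw [sub_mul, one_mul, h1, sub_self]
  rcases mul_eq_zero.1 h3 with h | h
  · exact absurd (Circle.coe_eq_one.mp (by linear_combination h)) hg₀
  · exact h

open scoped Classical in
theorem aux_char_orth (χ₁ χ₂ : ContinuousMonoidHom G Circle) :
    ∫ g, ((((χ₁ g)⁻¹ : Circle) : ℂ) * ((χ₂ g : ℂ))) ∂μ =
      if χ₁ = χ₂ then 1 else 0 := by
  split_ifs with h
  · subst h
    have : ∀ g, (((χ₁ g)⁻¹ : Circle) : ℂ) * ((χ₁ g : ℂ)) = 1 := by
      intro g; push_cast; exact inv_mul_cancel₀ (Circle.coe_ne_zero _)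
    simp_rw [this, integral_const, probReal_univ, one_smul]
  · have hne : χ₁⁻¹ * χ₂ ≠ 1 := by
      intro hc
      exact h (inv_mul_eq_one.mp hc)
    have := aux_char_int μ (χ₁⁻¹ * χ₂) hne
    have heq : ∀ g, (((χ₁⁻¹ * χ₂) g : ℂ)) = (((χ₁ g)⁻¹ : Circle) : ℂ) * ((χ₂ g : ℂ)) := by
      intro g; rfl
    simp_rw [heq] at this
    exact this

end Aux

/-- A continuous map `f : C(G, A)` "is a norm-continuous representation of `G` in `A`":
it is unitary-valued, unital and multiplicative. -/
def IsUnitaryRep {G : Type*} [Group G] [TopologicalSpace G]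
    {A : Type*} [NormedRing A] [StarRing A] [CStarRing A] [NormedAlgebra ℂ A]
    [CompleteSpace A] [StarModule ℂ A] (f : C(G, A)) : Prop :=
  (∀ g : G, f g ∈ unitary A) ∧ f 1 = 1 ∧ ∀ g h : G, f (g * h) = f g * f h

section Rep

variable {G : Type*} [CommGroup G] [TopologicalSpace G] [IsTopologicalGroup G] [CompactSpace G]
  [MeasurableSpace G] [BorelSpace G]
  (μ : Measure G) [μ.IsHaarMeasure] [IsProbabilityMeasure μ]
  {A : Type*} [NormedRing A] [StarRing A] [CStarRing A] [NormedAlgebra ℂ A]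
  [CompleteSpace A] [StarModule ℂ A]

noncomputable def specProj (f : C(G, A)) (χ' : ContinuousMonoidHom G Circle) : A :=
  ∫ g, (((χ' g)⁻¹ : Circle) : ℂ) • f g ∂μ

theorem aux_cont (χ' : ContinuousMonoidHom G Circle) (f : C(G, A)) :
    Continuous fun g => (((χ' g)⁻¹ : Circle) : ℂ) • f g :=
  ((continuous_subtype_val.comp ((map_continuous χ').inv)).smul f.continuous)

theorem aux_star_rep {f : C(G, A)} (hf : IsUnitaryRep f) (g : G) :
    star (f g) = f g⁻¹ := by
  obtain ⟨hu, h1, hm⟩ := hf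
  have e1 : f g * f g⁻¹ = 1 := by rw [← hm, mul_inv_cancel, h1]
  have e2 : star (f g) * f g = 1 := ((Unitary.mem_iff).1 (hu g)).1
  calc star (f g) = star (f g) * (f g * f g⁻¹) := by rw [e1, mul_one]
    _ = (star (f g) * f g) * f g⁻¹ := by rw [mul_assoc]
    _ = f g⁻¹ := by rw [e2, one_mul]

theorem aux_rep_mul_proj {f : C(G, A)} (hf : IsUnitaryRep f)
    (χ' : ContinuousMonoidHom G Circle) (g : G) :
    f g * specProj μ f χ' = ((χ' g : ℂ)) • specProj μ f χ' := by
  obtain ⟨hu, h1, hm⟩ := hf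
  have hint : Integrable (fun g => (((χ' g)⁻¹ : Circle) : ℂ) • f g) μ :=
    aux_integrable μ (aux_cont χ' f)
  have step1 : f g * specProj μ f χ' =
      ∫ h, (((χ' h)⁻¹ : Circle) : ℂ) • f (g * h) ∂μ := by
    have e := (ContinuousLinearMap.mul ℂ A (f g)).integral_comp_comm hint
    have e' : f g * specProj μ f χ' =
        ∫ h, f g * ((((χ' h)⁻¹ : Circle) : ℂ) • f h) ∂μ := e.symm
    rw [e']
    congr 1; ext h
    rw [mul_smul_comm, ← hm]
  have step2 : (∫ h, (((χ' h)⁻¹ : Circle) : ℂ) • f (g * h) ∂μ) =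
      ∫ k, (((χ' (g⁻¹ * k))⁻¹ : Circle) : ℂ) • f k ∂μ := by
    rw [← integral_mul_left_eq_self (fun k => (((χ' (g⁻¹ * k))⁻¹ : Circle) : ℂ) • f k) g]
    congr 1; ext h
    rw [inv_mul_cancel_left]
  have step3 : (∫ k, (((χ' (g⁻¹ * k))⁻¹ : Circle) : ℂ) • f k ∂μ) =
      ((χ' g : ℂ)) • specProj μ f χ' := by
    rw [specProj, ← integral_smul]
    congr 1; ext k
    rw [← mul_smul]
    congr 1
    push_cast [map_mul, map_inv]
    field_simp
  rw [step1, step2, step3]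

theorem aux_proj_mul_rep {f : C(G, A)} (hf : IsUnitaryRep f)
    (χ' : ContinuousMonoidHom G Circle) (g : G) :
    specProj μ f χ' * f g = ((χ' g : ℂ)) • specProj μ f χ' := by
  obtain ⟨hu, h1, hm⟩ := hf
  have hint : Integrable (fun g => (((χ' g)⁻¹ : Circle) : ℂ) • f g) μ :=
    aux_integrable μ (aux_cont χ' f)
  have step1 : specProj μ f χ' * f g =
      ∫ h, (((χ' h)⁻¹ : Circle) : ℂ) • f (g * h) ∂μ := by
    have e := ((ContinuousLinearMap.mul ℂ A).flip (f g)).integral_comp_comm hint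
    have e' : specProj μ f χ' * f g =
        ∫ h, ((((χ' h)⁻¹ : Circle) : ℂ) • f h) * f g ∂μ := e.symm
    rw [e']
    congr 1; ext h
    rw [smul_mul_assoc, ← hm, mul_comm h g]
  rw [step1]
  have := aux_rep_mul_proj μ ⟨hu, h1, hm⟩ χ' g
  have e := (ContinuousLinearMap.mul ℂ A (f g)).integral_comp_comm hint
  have step1' : f g * specProj μ f χ' =
      ∫ h, (((χ' h)⁻¹ : Circle) : ℂ) • f (g * h) ∂μ := by
    have e' : f g * specProj μ f χ' =
        ∫ h, f g * ((((χ' h)⁻¹ : Circle) : ℂ) • f h) ∂μ := e.symm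
    rw [e']
    congr 1; ext h
    rw [mul_smul_comm, ← hm]
  rw [← step1', this]

end Rep

section Rep2

variable {G : Type*} [CommGroup G] [TopologicalSpace G] [IsTopologicalGroup G] [CompactSpace G]
  [MeasurableSpace G] [BorelSpace G]
  (μ : Measure G) [μ.IsHaarMeasure] [IsProbabilityMeasure μ]
  {A : Type*} [NormedRing A] [StarRing A] [CStarRing A] [NormedAlgebra ℂ A]
  [CompleteSpace A] [StarModule ℂ A]

open scoped Classical in
theorem aux_proj_mul_proj {f : C(G, A)} (hf : IsUnitaryRep f)
    (χ₁ χ₂ : ContinuousMonoidHom G Circle) :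
    specProj μ f χ₁ * specProj μ f χ₂ =
      (if χ₁ = χ₂ then (1 : ℂ) else 0) • specProj μ f χ₂ := by
  have hint : Integrable (fun g => (((χ₁ g)⁻¹ : Circle) : ℂ) • f g) μ :=
    aux_integrable μ (aux_cont χ₁ f)
  have e := ((ContinuousLinearMap.mul ℂ A).flip (specProj μ f χ₂)).integral_comp_comm hint
  have e' : specProj μ f χ₁ * specProj μ f χ₂ =
      ∫ g, ((((χ₁ g)⁻¹ : Circle) : ℂ) • f g) * specProj μ f χ₂ ∂μ := e.symm
  rw [e']
  calc (∫ g, ((((χ₁ g)⁻¹ : Circle) : ℂ) • f g) * specProj μ f χ₂ ∂μ)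
      = ∫ g, ((((χ₁ g)⁻¹ : Circle) : ℂ) * ((χ₂ g : ℂ))) • specProj μ f χ₂ ∂μ := by
        congr 1; ext g
        rw [smul_mul_assoc, aux_rep_mul_proj μ hf χ₂ g, ← mul_smul]
    _ = (∫ g, ((((χ₁ g)⁻¹ : Circle) : ℂ) * ((χ₂ g : ℂ))) ∂μ) • specProj μ f χ₂ := by
        rw [integral_smul_const]
    _ = (if χ₁ = χ₂ then (1 : ℂ) else 0) • specProj μ f χ₂ := by
        rw [aux_char_orth]

theorem aux_proj_idem {f : C(G, A)} (hf : IsUnitaryRep f)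
    (χ' : ContinuousMonoidHom G Circle) : IsIdempotentElem (specProj μ f χ') := by
  have := aux_proj_mul_proj μ hf χ' χ'
  simpa [IsIdempotentElem] using this

theorem aux_proj_orth {f : C(G, A)} (hf : IsUnitaryRep f)
    {χ₁ χ₂ : ContinuousMonoidHom G Circle} (h : χ₁ ≠ χ₂) :
    specProj μ f χ₁ * specProj μ f χ₂ = 0 := by
  have := aux_proj_mul_proj μ hf χ₁ χ₂
  simpa [h] using this

theorem aux_proj_sa {f : C(G, A)} (hf : IsUnitaryRep f)
    (χ' : ContinuousMonoidHom G Circle) : IsSelfAdjoint (specProj μ f χ') := by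
  set P := specProj μ f χ' with hP
  have h1 : ∀ g, star P * f g = ((χ' g : ℂ)) • star P := by
    intro g
    have := aux_rep_mul_proj μ hf χ' g⁻¹
    have hst := congrArg star this
    rw [star_mul, aux_star_rep hf, inv_inv, star_smul] at hst
    rw [hst]
    congr 1
    rw [map_inv]
    rw [RCLike.star_def, ← Circle.coe_inv_eq_conj, inv_inv]
  have hint : Integrable (fun g => (((χ' g)⁻¹ : Circle) : ℂ) • f g) μ :=
    aux_integrable μ (aux_cont χ' f)
  have e := (ContinuousLinearMap.mul ℂ A (star P)).integral_comp_comm hint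
  have h2 : star P * P = star P := by
    have e' : star P * P = ∫ g, star P * ((((χ' g)⁻¹ : Circle) : ℂ) • f g) ∂μ := e.symm
    rw [e']
    have : ∀ g, star P * ((((χ' g)⁻¹ : Circle) : ℂ) • f g) = star P := by
      intro g
      rw [mul_smul_comm, h1 g, ← mul_smul]
      have : (((χ' g)⁻¹ : Circle) : ℂ) * ((χ' g : ℂ)) = 1 := by
        push_cast
        exact inv_mul_cancel₀ (Circle.coe_ne_zero _)
      rw [this, one_smul]
    simp_rw [this]
    simp [measure_univ]
  have h3 : star (star P * P) = star P * P := by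
    rw [star_mul, star_star]
  rw [h2] at h3
  have : P = star P := by
    conv_lhs => rw [← star_star P, h3]
  exact this.symm

end Rep2

section Fwd

variable {G : Type*} [CommGroup G] [TopologicalSpace G] [IsTopologicalGroup G] [CompactSpace G]
  [MeasurableSpace G] [BorelSpace G]
  (μ : Measure G) [μ.IsHaarMeasure] [IsProbabilityMeasure μ]
  {A : Type*} [NormedRing A] [StarRing A] [CStarRing A] [NormedAlgebra ℂ A]
  [CompleteSpace A] [StarModule ℂ A]
  {ι : Type*} [Fintype ι]

noncomputable def fwdRep (χ : ι → ContinuousMonoidHom G Circle) (p : ι → A) : C(G, A) where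
  toFun := fun g => ∑ i, ((χ i g : ℂ)) • p i
  continuous_toFun := by
    apply continuous_finset_sum
    intro i _
    exact (continuous_subtype_val.comp (map_continuous (χ i))).smul continuous_const

@[simp] theorem fwdRep_apply (χ : ι → ContinuousMonoidHom G Circle) (p : ι → A) (g : G) :
    fwdRep χ p g = ∑ i, ((χ i g : ℂ)) • p i := rfl

open scoped Classical in
theorem aux_fwd_spec (χ : ι → ContinuousMonoidHom G Circle) (p : ι → A)
    (χ' : ContinuousMonoidHom G Circle) :
    specProj μ (fwdRep χ p) χ' = ∑ i, (if χ' = χ i then (1 : ℂ) else 0) • p i := by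
  rw [specProj]
  have : ∀ g, (((χ' g)⁻¹ : Circle) : ℂ) • fwdRep χ p g =
      ∑ i, ((((χ' g)⁻¹ : Circle) : ℂ) * ((χ i g : ℂ))) • p i := by
    intro g
    rw [fwdRep_apply, Finset.smul_sum]
    congr 1; ext i
    rw [mul_smul]
  simp_rw [this]
  rw [integral_finset_sum]
  · congr 1; ext i
    rw [integral_smul_const, aux_char_orth]
  · intro i _
    apply aux_integrable μ
    exact ((continuous_subtype_val.comp ((map_continuous χ').inv)).mul
      (continuous_subtype_val.comp (map_continuous (χ i)))).smul continuous_const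

theorem aux_key_mul {p : ι → A} (hidem : ∀ i, IsIdempotentElem (p i))
    (horth : ∀ i j, i ≠ j → p i * p j = 0) (c d : ι → ℂ) :
    (∑ i, c i • p i) * (∑ j, d j • p j) = ∑ i, (c i * d i) • p i := by
  classical
  rw [Finset.sum_mul_sum]
  apply Finset.sum_congr rfl
  intro i _
  rw [Finset.sum_eq_single i]
  · rw [smul_mul_smul_comm, hidem i]
  · intro j _ hj
    rw [smul_mul_smul_comm, horth i j (Ne.symm hj), smul_zero]
  · intro h; exact absurd (Finset.mem_univ i) h

theorem aux_fwd_star {χ : ι → ContinuousMonoidHom G Circle} {p : ι → A}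
    (hsa : ∀ i, IsSelfAdjoint (p i)) (g : G) :
    star (fwdRep χ p g) = ∑ i, ((((χ i g)⁻¹ : Circle)) : ℂ) • p i := by
  rw [fwdRep_apply, star_sum]
  congr 1; ext i
  rw [star_smul, hsa i, RCLike.star_def, ← Circle.coe_inv_eq_conj]

theorem aux_fwd_unitaryRep {χ : ι → ContinuousMonoidHom G Circle} {p : ι → A}
    (hsa : ∀ i, IsSelfAdjoint (p i)) (hidem : ∀ i, IsIdempotentElem (p i))
    (horth : ∀ i j, i ≠ j → p i * p j = 0)
    (hsum : ∑ i, p i = 1) : IsUnitaryRep (fwdRep χ p) := by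
  have hcc : ∀ (g : G) i, ((((χ i g)⁻¹ : Circle)) : ℂ) * ((χ i g : ℂ)) = 1 := by
    intro g i; push_cast; exact inv_mul_cancel₀ (Circle.coe_ne_zero _)
  have hcc' : ∀ (g : G) i, ((χ i g : ℂ)) * ((((χ i g)⁻¹ : Circle)) : ℂ) = 1 := by
    intro g i; rw [mul_comm]; exact hcc g i
  refine ⟨?_, ?_, ?_⟩
  · intro g
    rw [Unitary.mem_iff]
    constructor
    · rw [show star (fwdRep χ p g) = ∑ i, ((((χ i g)⁻¹ : Circle)) : ℂ) • p i from
        aux_fwd_star hsa g, fwdRep_apply, aux_key_mul hidem horth]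
      simp_rw [hcc g]
      simpa using hsum
    · rw [show star (fwdRep χ p g) = ∑ i, ((((χ i g)⁻¹ : Circle)) : ℂ) • p i from
        aux_fwd_star hsa g, fwdRep_apply, aux_key_mul hidem horth]
      simp_rw [hcc' g]
      simpa using hsum
  · rw [fwdRep_apply]
    simp only [map_one, Circle.coe_one, one_smul]
    exact hsum
  · intro g h
    rw [fwdRep_apply, fwdRep_apply, fwdRep_apply, aux_key_mul hidem horth]
    congr 1; ext i
    rw [map_mul]
    push_cast
    ring_nf

end Fwd

section Gelfand

variable {G : Type*} [CommGroup G] [TopologicalSpace G] [IsTopologicalGroup G] [CompactSpace G]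
  [MeasurableSpace G] [BorelSpace G]
  (μ : Measure G) [μ.IsHaarMeasure] [IsProbabilityMeasure μ]
  {A : Type*} [NormedRing A] [StarRing A] [CStarRing A] [NormedAlgebra ℂ A]
  [CompleteSpace A] [StarModule ℂ A]
  {ι : Type*} [Fintype ι]

theorem aux_sum_proj {f : C(G, A)} (hf : IsUnitaryRep f)
    {χ : ι → ContinuousMonoidHom G Circle} (hχ : Function.Injective χ)
    (hvan : ∀ χ' : ContinuousMonoidHom G Circle, (∀ i, χ' ≠ χ i) → specProj μ f χ' = 0) :
    ∑ i, specProj μ f (χ i) = 1 := by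
  classical
  obtain ⟨hu, h1, hm⟩ := hf
  letI : CStarAlgebra A :=
    { ‹NormedRing A›, ‹StarRing A›, ‹CStarRing A›, ‹NormedAlgebra ℂ A›, ‹StarModule ℂ A›,
      ‹CompleteSpace A› with }
  set S : StarSubalgebra ℂ A := StarAlgebra.adjoin ℂ (Set.range (⇑f)) with hS
  have hcomm : ∀ a ∈ Set.range ⇑f, ∀ b ∈ Set.range ⇑f, a * b = b * a := by
    rintro _ ⟨g, rfl⟩ _ ⟨h, rfl⟩
    rw [← hm, ← hm, mul_comm]
  have hcomm_star : ∀ a ∈ Set.range ⇑f, ∀ b ∈ Set.range ⇑f, a * star b = star b * a := by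
    rintro _ ⟨g, rfl⟩ _ ⟨h, rfl⟩
    rw [aux_star_rep ⟨hu, h1, hm⟩, ← hm, ← hm, mul_comm]
  letI : CommRing S := StarAlgebra.adjoinCommRingOfComm ℂ hcomm hcomm_star
  set C : StarSubalgebra ℂ A := S.topologicalClosure with hC
  haveI hCc : IsClosed (C : Set A) := S.isClosed_topologicalClosure
  letI instCommRingC : CommRing ↥C := S.commRingTopologicalClosure mul_comm
  letI instCStarC : CStarAlgebra ↥C := StarSubalgebra.cstarAlgebra C
  letI : CommCStarAlgebra ↥C := { instCStarC with mul_comm := mul_comm }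
  have hfmem : ∀ g, f g ∈ C := fun g =>
    S.le_topologicalClosure (StarAlgebra.subset_adjoin ℂ _ ⟨g, rfl⟩)
  set fC : G → ↥C := fun g => (⟨f g, hfmem g⟩ : ↥C) with hfC
  have hfCcont : Continuous fC := f.continuous.subtype_mk _
  have hintC : ∀ χ' : ContinuousMonoidHom G Circle,
      Integrable (fun g => (((χ' g)⁻¹ : Circle) : ℂ) • fC g) μ := fun χ' =>
    aux_integrable μ ((continuous_subtype_val.comp ((map_continuous χ').inv)).smul hfCcont)
  set PC : ContinuousMonoidHom G Circle → ↥C :=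
    fun χ' => ∫ g, (((χ' g)⁻¹ : Circle) : ℂ) • fC g ∂μ with hPC
  set ιC : ↥C →L[ℂ] A :=
    { toLinearMap := (C.subtype : ↥C →⋆ₐ[ℂ] A).toAlgHom.toLinearMap,
      cont := continuous_subtype_val } with hιC
  have coePC : ∀ χ', ((PC χ' : A)) = specProj μ f χ' := by
    intro χ'
    calc ((PC χ' : A)) = ιC (∫ g, (((χ' g)⁻¹ : Circle) : ℂ) • fC g ∂μ) := rfl
      _ = ∫ g, ιC ((((χ' g)⁻¹ : Circle) : ℂ) • fC g) ∂μ :=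
          (ιC.integral_comp_comm (hintC χ')).symm
      _ = specProj μ f χ' := by
          rw [specProj]; congr 1
  have hfC1 : fC 1 = 1 := Subtype.ext h1
  have hfCm : ∀ g h, fC (g * h) = fC g * fC h := fun g h => Subtype.ext (hm g h)
  have hfCu : ∀ g, fC g ∈ unitary ↥C := by
    intro g
    rw [Unitary.mem_iff]
    exact ⟨Subtype.ext ((Unitary.mem_iff.1 (hu g)).1),
      Subtype.ext ((Unitary.mem_iff.1 (hu g)).2)⟩
  have hφkey : ∀ φ : WeakDual.characterSpace ℂ ↥C, φ (1 - ∑ i, PC (χ i)) = 0 := by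
    intro φ
    haveI : Nontrivial ↥C :=
      ⟨⟨0, 1, fun h01 => zero_ne_one (α := ℂ) (by rw [← map_zero φ, h01, map_one φ])⟩⟩
    have hmem : ∀ g, φ (fC g) ∈ Metric.sphere (0 : ℂ) 1 :=
      fun g => spectrum.subset_circle_of_unitary (hfCu g) (AlgHom.apply_mem_spectrum φ (fC g))
    set χφ : ContinuousMonoidHom G Circle :=
      { toFun := fun g => (⟨φ (fC g), hmem g⟩ : Circle),
        map_one' := by ext; simp only [hfC1, map_one]; rfl,
        map_mul' := fun g h => by ext; simp only [hfCm, map_mul]; rfl,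
        continuous_toFun := Continuous.subtype_mk ((map_continuous φ).comp hfCcont) _ }
      with hχφ
    have hφP : ∀ χ', φ (PC χ') = if χ' = χφ then 1 else 0 := by
      intro χ'
      have e := (φ.1 : ↥C →L[ℂ] ℂ).integral_comp_comm (hintC χ')
      calc φ (PC χ') = ∫ g, φ ((((χ' g)⁻¹ : Circle) : ℂ) • fC g) ∂μ := e.symm
        _ = ∫ g, (((χ' g)⁻¹ : Circle) : ℂ) * ((χφ g : ℂ)) ∂μ := by
            congr 1; ext g
            have hg : ((χφ g : ℂ)) = φ (fC g) := rfl
            rw [_root_.map_smul, smul_eq_mul, hg]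
        _ = if χ' = χφ then 1 else 0 := aux_char_orth μ χ' χφ
    have hrange : ∃ j, χφ = χ j := by
      by_contra hc
      push_neg at hc
      have h0 : specProj μ f χφ = 0 := hvan χφ hc
      have hPC0 : PC χφ = 0 := by
        apply Subtype.ext
        rw [coePC, h0]; rfl
      have := hφP χφ
      rw [hPC0, if_pos rfl, map_zero] at this
      exact zero_ne_one this
    obtain ⟨j, hj⟩ := hrange
    have hsum : φ (∑ i, PC (χ i)) = 1 := by
      rw [map_sum]
      have : ∀ i, φ (PC (χ i)) = if i = j then (1 : ℂ) else 0 := by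
        intro i
        rw [hφP]
        congr 1
        simp only [eq_iff_iff]
        constructor
        · intro h; exact hχ (h.trans hj)
        · intro h; rw [h]; exact hj.symm
      simp_rw [this]
      simp
    rw [map_sub, map_one, hsum, sub_self]
  set qC : ↥C := 1 - ∑ i, PC (χ i) with hqC
  have hcoe : ((qC : A)) = 1 - ∑ i, specProj μ f (χ i) := by
    rw [hqC]
    push_cast
    simp only [coePC]
  have hq0 : ((qC : A)) = 0 := by
    have hspec : spectrum ℂ ((qC : A)) ⊆ {0} := by
      intro z hz
      have h1' : z ∈ spectrum ℂ qC :=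
        AlgHom.spectrum_apply_subset (C.subtype : ↥C →⋆ₐ[ℂ] A) qC hz
      rw [WeakDual.CharacterSpace.mem_spectrum_iff_exists] at h1'
      obtain ⟨φ, hφ⟩ := h1'
      rw [← hφ, hφkey φ]
      rfl
    have hsa : IsSelfAdjoint ((qC : A)) := by
      rw [hcoe]
      have hs : IsSelfAdjoint (∑ i, specProj μ f (χ i)) := by
        have : star (∑ i, specProj μ f (χ i)) = ∑ i, specProj μ f (χ i) := by
          rw [star_sum]
          exact Finset.sum_congr rfl fun i _ => aux_proj_sa μ ⟨hu, h1, hm⟩ (χ i)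
        exact this
      exact IsSelfAdjoint.sub (IsSelfAdjoint.one A) hs
    have hrad : spectralRadius ℂ ((qC : A)) = 0 := by
      rw [spectralRadius]
      apply le_antisymm _ zero_le
      refine iSup₂_le fun z hz => ?_
      have hz0 := hspec hz
      simp only [Set.mem_singleton_iff] at hz0
      simp [hz0]
    have hnn := hsa.spectralRadius_eq_nnnorm
    rw [hrad] at hnn
    have hnn' : ‖(qC : A)‖₊ = 0 := by exact_mod_cast hnn.symm
    simpa [nnnorm_eq_zero] using hnn'
  rw [hcoe] at hq0
  exact (sub_eq_zero.mp hq0).symm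

end Gelfand

section Final

variable {G : Type*} [CommGroup G] [TopologicalSpace G] [IsTopologicalGroup G] [CompactSpace G]
  [MeasurableSpace G] [BorelSpace G]
  (μ : Measure G) [μ.IsHaarMeasure] [IsProbabilityMeasure μ]
  {A : Type*} [NormedRing A] [StarRing A] [CStarRing A] [NormedAlgebra ℂ A]
  [CompleteSpace A] [StarModule ℂ A]
  {ι : Type*} [Fintype ι]

theorem aux_rep_eq_sum {f : C(G, A)} (hf : IsUnitaryRep f)
    {χ : ι → ContinuousMonoidHom G Circle}
    (hχ : Function.Injective χ)
    (hvan : ∀ χ' : ContinuousMonoidHom G Circle, (∀ i, χ' ≠ χ i) → specProj μ f χ' = 0)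
    (g : G) :
    f g = ∑ i, ((χ i g : ℂ)) • specProj μ f (χ i) := by
  conv_lhs => rw [← mul_one (f g)]
  rw [← aux_sum_proj μ hf hχ hvan, Finset.mul_sum]
  exact Finset.sum_congr rfl fun i _ => aux_rep_mul_proj μ hf (χ i) g

theorem aux_fwd_lipschitz (χ : ι → ContinuousMonoidHom G Circle) :
    LipschitzWith (Fintype.card ι) (fun p : ι → A => fwdRep χ p) := by
  apply LipschitzWith.of_dist_le_mul
  intro p q
  rw [ContinuousMap.dist_le (by positivity)]
  intro g
  calc dist (fwdRep χ p g) (fwdRep χ q g)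
      ≤ ∑ i, dist (((χ i g : ℂ)) • p i) (((χ i g : ℂ)) • q i) := by
        rw [fwdRep_apply, fwdRep_apply]
        exact dist_sum_sum_le _ _ _
    _ ≤ ∑ _i : ι, dist p q := by
        apply Finset.sum_le_sum
        intro i _
        rw [dist_smul₀]
        have h1 : ‖((χ i g : ℂ))‖ = 1 := Circle.norm_coe _
        rw [h1, one_mul]
        exact dist_le_pi_dist p q i
    _ = (Fintype.card ι : ℝ) * dist p q := by
        rw [Finset.sum_const, Finset.card_univ, nsmul_eq_mul]

theorem aux_spec_lipschitz (χ' : ContinuousMonoidHom G Circle) :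
    LipschitzWith 1 (fun f : C(G, A) => specProj μ f χ') := by
  apply LipschitzWith.of_dist_le_mul
  intro f f'
  rw [NNReal.coe_one, one_mul, dist_eq_norm, specProj, specProj,
    ← integral_sub (aux_integrable μ (aux_cont χ' f)) (aux_integrable μ (aux_cont χ' f'))]
  have hb : ∀ g, ‖(((χ' g)⁻¹ : Circle) : ℂ) • f g - (((χ' g)⁻¹ : Circle) : ℂ) • f' g‖
      ≤ dist f f' := by
    intro g
    rw [← smul_sub, norm_smul]
    have h1 : ‖(((χ' g)⁻¹ : Circle) : ℂ)‖ = 1 := by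
      exact Circle.norm_coe _
    rw [h1, one_mul, ← dist_eq_norm]
    exact ContinuousMap.dist_apply_le_dist g
  calc ‖∫ g, ((((χ' g)⁻¹ : Circle) : ℂ) • f g - (((χ' g)⁻¹ : Circle) : ℂ) • f' g) ∂μ‖
      ≤ dist f f' * (μ Set.univ).toReal :=
        norm_integral_le_of_norm_le_const (Filter.Eventually.of_forall hb)
    _ = dist f f' := by simp [measure_univ]

end Final

/-- **Representations with spectrum contained in a fixed finite set of characters**
(classical analogue of the paper's Lemma identifying such representations):
for a compact abelian group `G` with Haar probability measure `μ`, a unital C*-algebra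
`A`, and a finite family `χ : ι → Ĝ` of pairwise distinct continuous characters, the
space of families `(p i)` of pairwise orthogonal projections in `A` summing to `1` is
homeomorphic — via `(p i) ↦ (g ↦ ∑ i, χ i g • p i)` — to the space of norm-continuous
representations `U` of `G` in `A` whose spectral projections `P_{χ'}(U)` vanish for
every continuous character `χ'` outside the family `χ`. -/
theorem homeomorph_projection_families_reps_with_spectrum_in
    {G : Type*} [CommGroup G] [TopologicalSpace G] [IsTopologicalGroup G] [CompactSpace G]
    [MeasurableSpace G] [BorelSpace G]
    (μ : Measure G) [μ.IsHaarMeasure] [IsProbabilityMeasure μ]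
    {A : Type*} [NormedRing A] [StarRing A] [CStarRing A] [NormedAlgebra ℂ A]
    [CompleteSpace A] [StarModule ℂ A]
    {ι : Type*} [Fintype ι] (χ : ι → ContinuousMonoidHom G Circle)
    (hχ : Function.Injective χ) :
    ∃ h : {p : ι → A //
            (∀ i, IsSelfAdjoint (p i)) ∧ (∀ i, IsIdempotentElem (p i)) ∧
            (∀ i j, i ≠ j → p i * p j = 0) ∧ (∑ i, p i = 1)} ≃ₜ
          {f : C(G, A) // IsUnitaryRep f ∧
            ∀ χ' : ContinuousMonoidHom G Circle, (∀ i, χ' ≠ χ i) →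
              (∫ g, (((χ' g)⁻¹ : Circle) : ℂ) • f g ∂μ) = 0},
      ∀ p g, ((h p : C(G, A)) g) = ∑ i, ((χ i g : ℂ)) • (p : ι → A) i := by
  classical
  let P := {p : ι → A //
            (∀ i, IsSelfAdjoint (p i)) ∧ (∀ i, IsIdempotentElem (p i)) ∧
            (∀ i j, i ≠ j → p i * p j = 0) ∧ (∑ i, p i = 1)}
  let R := {f : C(G, A) // IsUnitaryRep f ∧
            ∀ χ' : ContinuousMonoidHom G Circle, (∀ i, χ' ≠ χ i) →
              (∫ g, (((χ' g)⁻¹ : Circle) : ℂ) • f g ∂μ) = 0}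
  have hvan' : ∀ (fr : R) (χ' : ContinuousMonoidHom G Circle),
      (∀ i, χ' ≠ χ i) → specProj μ (fr.1) χ' = 0 := fun fr => fr.2.2
  let F : P → R := fun p =>
    ⟨fwdRep χ p.1, aux_fwd_unitaryRep p.2.1 p.2.2.1 p.2.2.2.1 p.2.2.2.2, by
      intro χ' hχ'
      have h0 : specProj μ (fwdRep χ p.1) χ' = 0 := by
        rw [aux_fwd_spec]
        apply Finset.sum_eq_zero
        intro i _
        rw [if_neg (hχ' i), zero_smul]
      exact h0⟩
  let Finv : R → P := fun fr =>
    ⟨fun i => specProj μ fr.1 (χ i),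
      fun i => aux_proj_sa μ fr.2.1 (χ i),
      fun i => aux_proj_idem μ fr.2.1 (χ i),
      fun i j hij => aux_proj_orth μ fr.2.1 (fun h => hij (hχ h)),
      aux_sum_proj μ fr.2.1 hχ (hvan' fr)⟩
  have li : Function.LeftInverse Finv F := by
    intro p
    apply Subtype.ext
    funext i
    show specProj μ (fwdRep χ p.1) (χ i) = p.1 i
    rw [aux_fwd_spec]
    rw [Finset.sum_eq_single i]
    · rw [if_pos rfl, one_smul]
    · intro j _ hj
      rw [if_neg (fun h => hj (hχ h).symm), zero_smul]
    · intro h; exact absurd (Finset.mem_univ i) h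
  have ri : Function.RightInverse Finv F := by
    intro fr
    apply Subtype.ext
    apply ContinuousMap.ext
    intro g
    show fwdRep χ (fun i => specProj μ fr.1 (χ i)) g = fr.1 g
    rw [fwdRep_apply]
    exact (aux_rep_eq_sum μ fr.2.1 hχ (hvan' fr) g).symm
  have cF : Continuous F := by
    apply Continuous.subtype_mk
    exact ((aux_fwd_lipschitz (A := A) χ).continuous).comp continuous_subtype_val
  have cFi : Continuous Finv := by
    apply Continuous.subtype_mk
    apply continuous_pi
    intro i
    exact ((aux_spec_lipschitz μ (χ i)).continuous).comp continuous_subtype_val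
  exact ⟨⟨⟨F, Finv, li, ri⟩, cF, cFi⟩, fun p g => rfl⟩
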